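/- Let P be a Markov operator with adjoint P* acting on probability measures, W a Lyapunov function with PW ≤ α₁W + α₂ (α₁ ∈ (0,1), α₂ > 0), and suppose the minorization condition P*δ_x ≥ η ν holds uniformly for x in C(R) = {W ≤ R} for some R > 2α₂/(1-α₁), η > 0 and probability measure ν. If π₁ and π₂ are both stationary distributions of P with finite W-moment, then π₁ = π₂. -/

import Mathlib

open MeasureTheory ProbabilityTheory
open scoped ENNReal NNReal

/-- Auxiliary lemma for the uniqueness part of Harris' theorem.  Given two stationary
probability measures `p`, `q` and a Hahn set `E` for the pair (so `q ≤ p` on `E` and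
`p ≤ q` on `Eᶜ`), let `a = p|_E - q|_E` and `b = q|_{Eᶜ} - p|_{Eᶜ}` be the mutually
singular parts.  Then stationarity forces the pushforward of `a` to stay inside `E`
(and that of `b` inside `Eᶜ`), and moreover, if `a` puts no mass on the small set
`C = {W ≤ R}`, the drift condition forces `a = 0`. -/
theorem stmt17_key {X : Type*} [MeasurableSpace X]
    (κ : Kernel X X) [IsMarkovKernel κ]
    (W : X → ℝ) (hWmeas : Measurable W) (hWnn : ∀ x, 0 ≤ W x)
    (α₁ α₂ : ℝ) (hα₁ : α₁ ∈ Set.Ioo (0:ℝ) 1) (hα₂ : 0 < α₂)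
    (hdrift : ∀ x, ∫ y, W y ∂(κ x) ≤ α₁ * W x + α₂)
    (R : ℝ) (hR : 2 * α₂ / (1 - α₁) < R)
    (p q : Measure X) [IsProbabilityMeasure p] [IsProbabilityMeasure q]
    (hstatp : p.bind κ = p) (hstatq : q.bind κ = q)
    (hmomp : Integrable W p)
    (E : Set X) (hE : MeasurableSet E)
    (h1 : q.restrict E ≤ p.restrict E) (h2 : p.restrict Eᶜ ≤ q.restrict Eᶜ) :
    ((p.restrict E - q.restrict E).bind κ) Eᶜ = 0 ∧
    ((q.restrict Eᶜ - p.restrict Eᶜ).bind κ) E = 0 ∧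
    ((p.restrict E - q.restrict E) {x | W x ≤ R} = 0 →
      (p.restrict E - q.restrict E) Set.univ = 0) := by
  have hα1' : 0 < 1 - α₁ := by
    have := hα₁.2
    linarith
  have hRpos : 0 < R := lt_trans (div_pos (by linarith) hα1') hR
  set a : Measure X := p.restrict E - q.restrict E with ha_def
  set b : Measure X := q.restrict Eᶜ - p.restrict Eᶜ with hb_def
  set τ : Measure X := q.restrict E + p.restrict Eᶜ with hτ_def
  have ha : a + q.restrict E = p.restrict E := Measure.sub_add_cancel_of_le h1
  have hb : b + p.restrict Eᶜ = q.restrict Eᶜ := Measure.sub_add_cancel_of_le h2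
  have hp0 : τ + a = p := by
    calc τ + a = (a + q.restrict E) + p.restrict Eᶜ := by rw [hτ_def]; abel
    _ = p.restrict E + p.restrict Eᶜ := by rw [ha]
    _ = p := Measure.restrict_add_restrict_compl hE
  have hq0 : τ + b = q := by
    calc τ + b = q.restrict E + (b + p.restrict Eᶜ) := by rw [hτ_def]; abel
    _ = q.restrict E + q.restrict Eᶜ := by rw [hb]
    _ = q := Measure.restrict_add_restrict_compl hE
  have hp : τ.bind κ + a.bind κ = p := by
    rw [← Measure.comp_add, hp0, hstatp]
  have hq : τ.bind κ + b.bind κ = q := by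
    rw [← Measure.comp_add, hq0, hstatq]
  -- mass preservation under bind
  have hmass : ∀ μ : Measure X, (μ.bind κ) Set.univ = μ Set.univ := by
    intro μ
    rw [Measure.bind_apply MeasurableSet.univ κ.measurable.aemeasurable]
    simp
  -- finiteness
  have ha_le_restrict : a ≤ p.restrict E := Measure.sub_le
  have hb_le_restrict : b ≤ q.restrict Eᶜ := Measure.sub_le
  have ha_le : a ≤ p := ha_le_restrict.trans Measure.restrict_le_self
  have hb_le : b ≤ q := hb_le_restrict.trans Measure.restrict_le_self
  haveI : IsFiniteMeasure a := isFiniteMeasure_of_le p ha_le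
  haveI : IsFiniteMeasure b := isFiniteMeasure_of_le q hb_le
  haveI : IsFiniteMeasure (a.bind κ) := ⟨by rw [hmass]; exact measure_lt_top a _⟩
  haveI : IsFiniteMeasure (b.bind κ) := ⟨by rw [hmass]; exact measure_lt_top b _⟩
  have hτκ_le : τ.bind κ ≤ p := by
    rw [← hp]; exact Measure.le_add_right le_rfl
  haveI : IsFiniteMeasure (τ.bind κ) := isFiniteMeasure_of_le p hτκ_le
  -- a lives on E, b lives on Eᶜ
  have haE : a Eᶜ = 0 := by
    have h := Measure.le_iff'.1 ha_le_restrict Eᶜ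
    rw [Measure.restrict_apply hE.compl, Set.compl_inter_self, measure_empty] at h
    exact le_antisymm h zero_le
  have hbE : b E = 0 := by
    have h := Measure.le_iff'.1 hb_le_restrict E
    rw [Measure.restrict_apply hE, Set.inter_compl_self, measure_empty] at h
    exact le_antisymm h zero_le
  -- helper for real conversion
  have tr : ∀ {u v w : ℝ≥0∞}, u + v = w → u ≠ ⊤ → v ≠ ⊤ →
      u.toReal + v.toReal = w.toReal := by
    intro u v w h hu hv
    rw [← ENNReal.toReal_add hu hv, h]
  -- the mass bookkeeping identities
  have hpE : (τ.bind κ) E + (a.bind κ) E = p E := by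
    rw [← Measure.add_apply, hp]
  have hpEc : (τ.bind κ) Eᶜ + (a.bind κ) Eᶜ = p Eᶜ := by
    rw [← Measure.add_apply, hp]
  have hqE : (τ.bind κ) E + (b.bind κ) E = q E := by
    rw [← Measure.add_apply, hq]
  have hqEc : (τ.bind κ) Eᶜ + (b.bind κ) Eᶜ = q Eᶜ := by
    rw [← Measure.add_apply, hq]
  have haE2 : a Set.univ + q E = p E := by
    have h := congrArg (fun μ : Measure X => μ Set.univ) ha
    simp only [Measure.add_apply, Measure.restrict_apply_univ] at h
    exact h
  have hbE2 : b Set.univ + p Eᶜ = q Eᶜ := by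
    have h := congrArg (fun μ : Measure X => μ Set.univ) hb
    simp only [Measure.add_apply, Measure.restrict_apply_univ] at h
    exact h
  have hτu : (τ.bind κ) E + (τ.bind κ) Eᶜ = q E + p Eᶜ := by
    rw [measure_add_measure_compl hE, hmass τ, hτ_def, Measure.add_apply,
      Measure.restrict_apply_univ, Measure.restrict_apply_univ]
  have hau : (a.bind κ) E + (a.bind κ) Eᶜ = a Set.univ := by
    rw [measure_add_measure_compl hE, hmass]
  have hbu : (b.bind κ) E + (b.bind κ) Eᶜ = b Set.univ := by
    rw [measure_add_measure_compl hE, hmass]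
  -- convert to reals and conclude the first two statements
  have r_pE := tr hpE (measure_ne_top _ _) (measure_ne_top _ _)
  have r_pEc := tr hpEc (measure_ne_top _ _) (measure_ne_top _ _)
  have r_qE := tr hqE (measure_ne_top _ _) (measure_ne_top _ _)
  have r_qEc := tr hqEc (measure_ne_top _ _) (measure_ne_top _ _)
  have r_aE2 := tr haE2 (measure_ne_top _ _) (measure_ne_top _ _)
  have r_bE2 := tr hbE2 (measure_ne_top _ _) (measure_ne_top _ _)
  have r_τu := tr hτu (measure_ne_top _ _) (measure_ne_top _ _)
  have r_au := tr hau (measure_ne_top _ _) (measure_ne_top _ _)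
  have r_bu := tr hbu (measure_ne_top _ _) (measure_ne_top _ _)
  have r_τu' : ((τ.bind κ) E).toReal + ((τ.bind κ) Eᶜ).toReal
      = (q E).toReal + (p Eᶜ).toReal := by
    rw [r_τu, ENNReal.toReal_add (measure_ne_top _ _) (measure_ne_top _ _)]
  have hy2z1 : ((a.bind κ) Eᶜ).toReal + ((b.bind κ) E).toReal = 0 := by
    have h1' : (q E).toReal + (p Eᶜ).toReal + ((a.bind κ) E).toReal
        + ((b.bind κ) Eᶜ).toReal = (p E).toReal + (q Eᶜ).toReal := by
      linarith [r_pE, r_qEc, r_τu']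
    linarith [r_aE2, r_bE2, r_au, r_bu, h1']
  have hy2 : (a.bind κ) Eᶜ = 0 := by
    have h0 : ((a.bind κ) Eᶜ).toReal = 0 := by
      have := ENNReal.toReal_nonneg (a := (a.bind κ) Eᶜ)
      have := ENNReal.toReal_nonneg (a := (b.bind κ) E)
      linarith
    have := (ENNReal.toReal_eq_zero_iff _).1 h0
    rcases this with h | h
    · exact h
    · exact absurd h (measure_ne_top _ _)
  have hz1 : (b.bind κ) E = 0 := by
    have h0 : ((b.bind κ) E).toReal = 0 := by
      have := ENNReal.toReal_nonneg (a := (a.bind κ) Eᶜ)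
      have := ENNReal.toReal_nonneg (a := (b.bind κ) E)
      linarith
    have := (ENNReal.toReal_eq_zero_iff _).1 h0
    rcases this with h | h
    · exact h
    · exact absurd h (measure_ne_top _ _)
  refine ⟨hy2, hz1, ?_⟩
  -- now the drift argument
  intro haC
  set C : Set X := {x | W x ≤ R} with hC_def
  have hCmeas : MeasurableSet C := hWmeas measurableSet_Iic
  set g : X → ℝ≥0∞ := fun x => ENNReal.ofReal (W x) with hg_def
  have hg : Measurable g := hWmeas.ennreal_ofReal
  have hg_norm : ∀ (μ : Measure X), ∫⁻ x, ‖W x‖ₑ ∂μ = ∫⁻ x, g x ∂μ := by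
    intro μ
    apply lintegral_congr
    intro x
    rw [hg_def, Real.enorm_eq_ofReal (hWnn x)]
  have hSp : ∫⁻ x, g x ∂p ≠ ⊤ := by
    have := hmomp.hasFiniteIntegral
    rw [HasFiniteIntegral, hg_norm p] at this
    exact this.ne
  have hSa_le_p : ∫⁻ x, g x ∂a ≤ ∫⁻ x, g x ∂p := lintegral_mono' ha_le le_rfl
  have hSa : ∫⁻ x, g x ∂a ≠ ⊤ := (lt_of_le_of_lt hSa_le_p hSp.lt_top).ne
  -- drift inequality for the measure a
  have hFmeas : Measurable (fun x => ∫⁻ y, g y ∂κ x) :=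
    (Measure.measurable_lintegral hg).comp κ.measurable
  have hFp : ∫⁻ x, (∫⁻ y, g y ∂κ x) ∂p = ∫⁻ y, g y ∂p := by
    rw [← Measure.lintegral_bind κ.measurable.aemeasurable hg.aemeasurable, hstatp]
  have hae_p : ∀ᵐ x ∂p, (∫⁻ y, g y ∂κ x) < ⊤ := by
    apply ae_lt_top hFmeas
    rw [hFp]; exact hSp
  have hac : a ≪ p := Measure.absolutelyContinuous_of_le ha_le
  have hae_a : ∀ᵐ x ∂a, (∫⁻ y, g y ∂κ x) < ⊤ := hac.ae_le hae_p
  have hptwise : ∀ᵐ x ∂a, ∫⁻ y, g y ∂κ x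
      ≤ ENNReal.ofReal α₁ * g x + ENNReal.ofReal α₂ := by
    filter_upwards [hae_a] with x hx
    have hint : Integrable W (κ x) := by
      refine ⟨hWmeas.aestronglyMeasurable, ?_⟩
      rw [HasFiniteIntegral, hg_norm (κ x)]
      exact hx
    have h1' : ENNReal.ofReal (∫ y, W y ∂κ x) = ∫⁻ y, g y ∂κ x :=
      ofReal_integral_eq_lintegral_ofReal hint (Filter.Eventually.of_forall hWnn)
    rw [← h1']
    calc ENNReal.ofReal (∫ y, W y ∂κ x)
        ≤ ENNReal.ofReal (α₁ * W x + α₂) := ENNReal.ofReal_le_ofReal (hdrift x)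
      _ = ENNReal.ofReal (α₁ * W x) + ENNReal.ofReal α₂ :=
          ENNReal.ofReal_add (mul_nonneg hα₁.1.le (hWnn x)) hα₂.le
      _ = ENNReal.ofReal α₁ * g x + ENNReal.ofReal α₂ := by
          rw [hg_def, ENNReal.ofReal_mul hα₁.1.le]
  have hSa'_le : ∫⁻ y, g y ∂(a.bind κ)
      ≤ ENNReal.ofReal α₁ * (∫⁻ x, g x ∂a) + ENNReal.ofReal α₂ * a Set.univ := by
    rw [Measure.lintegral_bind κ.measurable.aemeasurable hg.aemeasurable]
    calc ∫⁻ x, (∫⁻ y, g y ∂κ x) ∂a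
        ≤ ∫⁻ x, (ENNReal.ofReal α₁ * g x + ENNReal.ofReal α₂) ∂a :=
          lintegral_mono_ae hptwise
      _ = ENNReal.ofReal α₁ * (∫⁻ x, g x ∂a) + ENNReal.ofReal α₂ * a Set.univ := by
          rw [lintegral_add_right _ measurable_const, lintegral_const_mul _ hg,
            lintegral_const]
  -- the weight of a is preserved: ∫ g da = ∫ g d(aκ)
  have hT_fin : ∫⁻ x in E, g x ∂(τ.bind κ) ≠ ⊤ := by
    have h1' : ∫⁻ x in E, g x ∂(τ.bind κ) ≤ ∫⁻ x, g x ∂(τ.bind κ) :=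
      setLIntegral_le_lintegral _ _
    have h2' : ∫⁻ x, g x ∂(τ.bind κ) ≤ ∫⁻ x, g x ∂p := lintegral_mono' hτκ_le le_rfl
    exact ((h1'.trans h2').trans_lt hSp.lt_top).ne
  have e1 : ∫⁻ x in E, g x ∂p = ∫⁻ x in E, g x ∂q + ∫⁻ x, g x ∂a := by
    calc ∫⁻ x in E, g x ∂p = ∫⁻ x, g x ∂(a + q.restrict E) := by rw [ha]
      _ = ∫⁻ x, g x ∂a + ∫⁻ x in E, g x ∂q := lintegral_add_measure _ _ _
      _ = ∫⁻ x in E, g x ∂q + ∫⁻ x, g x ∂a := by rw [add_comm]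
  have e2 : ∫⁻ x in E, g x ∂p
      = ∫⁻ x in E, g x ∂(τ.bind κ) + ∫⁻ x, g x ∂(a.bind κ) := by
    have haκfull : ∫⁻ x in E, g x ∂(a.bind κ) = ∫⁻ x, g x ∂(a.bind κ) := by
      rw [← lintegral_add_compl (fun x => g x) hE (μ := a.bind κ),
        setLIntegral_measure_zero _ _ hy2, add_zero]
    rw [← hp, Measure.restrict_add, lintegral_add_measure, haκfull]
  have e3 : ∫⁻ x in E, g x ∂q = ∫⁻ x in E, g x ∂(τ.bind κ) := by
    rw [← hq, Measure.restrict_add, lintegral_add_measure,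
      setLIntegral_measure_zero _ _ hz1, add_zero]
  have hSa_eq : ∫⁻ x, g x ∂(a.bind κ) = ∫⁻ x, g x ∂a := by
    have : ∫⁻ x in E, g x ∂(τ.bind κ) + ∫⁻ x, g x ∂(a.bind κ)
        = ∫⁻ x in E, g x ∂(τ.bind κ) + ∫⁻ x, g x ∂a := by
      rw [← e2, e1, e3]
    exact (ENNReal.add_right_inj hT_fin).1 this
  have hdrift_a : ∫⁻ x, g x ∂a
      ≤ ENNReal.ofReal α₁ * (∫⁻ x, g x ∂a) + ENNReal.ofReal α₂ * a Set.univ := by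
    exact hSa_eq ▸ hSa'_le
  -- lower bound : a gives no mass to C, so its weight is at least R * mass
  have haCc : a Cᶜ = a Set.univ := by
    have := measure_add_measure_compl (μ := a) hCmeas
    rw [haC, zero_add] at this
    exact this
  have hlow : ENNReal.ofReal R * a Set.univ ≤ ∫⁻ x, g x ∂a := by
    calc ENNReal.ofReal R * a Set.univ = ENNReal.ofReal R * a Cᶜ := by rw [haCc]
      _ = ∫⁻ _ in Cᶜ, ENNReal.ofReal R ∂a := (setLIntegral_const _ _).symm
      _ ≤ ∫⁻ x in Cᶜ, g x ∂a := by
          refine setLIntegral_mono' hCmeas.compl (fun x hx => ?_)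
          have : R ≤ W x := le_of_not_ge hx
          exact ENNReal.ofReal_le_ofReal this
      _ ≤ ∫⁻ x, g x ∂a := setLIntegral_le_lintegral _ _
  -- pass to the reals and derive a contradiction unless the mass is zero
  set mea := a Set.univ with hm_def
  by_contra hm
  have hmfin : mea ≠ ⊤ := measure_ne_top _ _
  have hmr : 0 < mea.toReal := ENNReal.toReal_pos hm hmfin
  set sr := (∫⁻ x, g x ∂a).toReal with hsr_def
  have hlow_r : R * mea.toReal ≤ sr := by
    have := ENNReal.toReal_mono hSa hlow
    rwa [ENNReal.toReal_mul, ENNReal.toReal_ofReal hRpos.le] at this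
  have hdrift_r : sr ≤ α₁ * sr + α₂ * mea.toReal := by
    have hne : ENNReal.ofReal α₁ * (∫⁻ x, g x ∂a) + ENNReal.ofReal α₂ * mea ≠ ⊤ := by
      apply ENNReal.add_ne_top.2
      constructor
      · exact ENNReal.mul_ne_top ENNReal.ofReal_ne_top hSa
      · exact ENNReal.mul_ne_top ENNReal.ofReal_ne_top hmfin
    have := ENNReal.toReal_mono hne hdrift_a
    rwa [ENNReal.toReal_add (ENNReal.mul_ne_top ENNReal.ofReal_ne_top hSa)
        (ENNReal.mul_ne_top ENNReal.ofReal_ne_top hmfin),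
      ENNReal.toReal_mul, ENNReal.toReal_mul,
      ENNReal.toReal_ofReal hα₁.1.le, ENNReal.toReal_ofReal hα₂.le] at this
  have hRα : 2 * α₂ < R * (1 - α₁) := by
    rw [div_lt_iff₀ hα1'] at hR
    linarith
  nlinarith [mul_le_mul_of_nonneg_right hlow_r hα1'.le,
    mul_pos hα₂ hmr, mul_lt_mul_of_pos_right hRα hmr]

theorem stmt17 {X : Type*} [MeasurableSpace X]
    (κ : Kernel X X) [IsMarkovKernel κ]
    (W : X → ℝ) (hWmeas : Measurable W) (hWnn : ∀ x, 0 ≤ W x)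
    (α₁ α₂ : ℝ) (hα₁ : α₁ ∈ Set.Ioo (0:ℝ) 1) (hα₂ : 0 < α₂)
    (hdrift : ∀ x, ∫ y, W y ∂(κ x) ≤ α₁ * W x + α₂)
    (R η : ℝ) (hR : 2 * α₂ / (1 - α₁) < R) (hη : 0 < η)
    (ν : Measure X) [IsProbabilityMeasure ν]
    (hminor : ∀ x, W x ≤ R → (ENNReal.ofReal η) • ν ≤ κ x)
    (π₁ π₂ : Measure X) [IsProbabilityMeasure π₁] [IsProbabilityMeasure π₂]
    (hstat₁ : π₁.bind κ = π₁) (hstat₂ : π₂.bind κ = π₂)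
    (hmom₁ : Integrable W π₁) (hmom₂ : Integrable W π₂) :
    π₁ = π₂ := by
  obtain ⟨D, hD, hD1, hD2⟩ := hahn_decomposition (μ := π₁) (ν := π₂)
  have h1 : π₂.restrict D ≤ π₁.restrict D := by
    rw [Measure.le_iff]
    intro s hs
    rw [Measure.restrict_apply hs, Measure.restrict_apply hs]
    exact hD1 _ (hs.inter hD) (Set.inter_subset_right)
  have h2 : π₁.restrict Dᶜ ≤ π₂.restrict Dᶜ := by
    rw [Measure.le_iff]
    intro s hs
    rw [Measure.restrict_apply hs, Measure.restrict_apply hs]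
    exact hD2 _ (hs.inter hD.compl) (Set.inter_subset_right)
  obtain ⟨haκ, hbκ, himpa⟩ := stmt17_key κ W hWmeas hWnn α₁ α₂ hα₁ hα₂ hdrift R hR
    π₁ π₂ hstat₁ hstat₂ hmom₁ D hD h1 h2
  have h2'' : π₂.restrict Dᶜᶜ ≤ π₁.restrict Dᶜᶜ := by rw [compl_compl]; exact h1
  obtain ⟨_, _, himpb⟩ := stmt17_key κ W hWmeas hWnn α₁ α₂ hα₁ hα₂ hdrift R hR
    π₂ π₁ hstat₂ hstat₁ hmom₂ Dᶜ hD.compl h2 h2''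
  set a : Measure X := π₁.restrict D - π₂.restrict D with ha_def
  set b : Measure X := π₂.restrict Dᶜ - π₁.restrict Dᶜ with hb_def
  have ha : a + π₂.restrict D = π₁.restrict D := Measure.sub_add_cancel_of_le h1
  have hb : b + π₁.restrict Dᶜ = π₂.restrict Dᶜ := Measure.sub_add_cancel_of_le h2
  set C : Set X := {x | W x ≤ R} with hC_def
  have hCmeas : MeasurableSet C := hWmeas measurableSet_Iic
  -- minorization forces the overlap to vanish
  set r : ℝ≥0∞ := ENNReal.ofReal η * (a C ⊓ b C) with hr_def
  have hover : ∀ (c : Measure X) (s : Set X), MeasurableSet s → c C ≥ a C ⊓ b C →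
      r * ν s ≤ ((c : Measure X).bind κ) s := by
    intro c s hs hcC
    have step1 : ENNReal.ofReal η * ν s * c C ≤ ∫⁻ x in C, (κ x) s ∂c := by
      rw [← setLIntegral_const C (ENNReal.ofReal η * ν s)]
      refine setLIntegral_mono' hCmeas (fun x hx => ?_)
      have hx' : W x ≤ R := hx
      have := Measure.le_iff'.1 (hminor x hx') s
      rwa [Measure.smul_apply, smul_eq_mul] at this
    calc r * ν s = ENNReal.ofReal η * (a C ⊓ b C) * ν s := by rw [hr_def]
      _ ≤ ENNReal.ofReal η * c C * ν s := by
          gcongr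
      _ = ENNReal.ofReal η * ν s * c C := by ring
      _ ≤ ∫⁻ x in C, (κ x) s ∂c := step1
      _ ≤ ∫⁻ x, (κ x) s ∂c := setLIntegral_le_lintegral _ _
      _ = ((c : Measure X).bind κ) s := (Measure.bind_apply hs κ.measurable.aemeasurable).symm
  have hra : r * ν Dᶜ = 0 := by
    have := hover a Dᶜ hD.compl inf_le_left
    rw [haκ] at this
    exact le_antisymm this zero_le
  have hrb : r * ν D = 0 := by
    have := hover b D hD inf_le_right
    rw [hbκ] at this
    exact le_antisymm this zero_le
  have hr0 : r = 0 := by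
    have : r * (ν D + ν Dᶜ) = 0 := by
      rw [mul_add, hra, hrb, add_zero]
    rwa [measure_add_measure_compl hD, measure_univ, mul_one] at this
  have hmin0 : a C ⊓ b C = 0 := by
    rcases mul_eq_zero.1 hr0 with h | h
    · exact absurd h (ENNReal.ofReal_pos.2 hη).ne'
    · exact h
  -- hence a C = 0 or b C = 0
  have hcases : a C = 0 ∨ b C = 0 := by
    rcases le_total (a C) (b C) with h | h
    · left; rwa [inf_eq_left.2 h] at hmin0
    · right; rwa [inf_eq_right.2 h] at hmin0
  -- the masses of a and b agree
  have haU : a Set.univ + π₂ D = π₁ D := by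
    have h := congrArg (fun μ : Measure X => μ Set.univ) ha
    simp only [Measure.add_apply, Measure.restrict_apply_univ] at h
    exact h
  have hbU : b Set.univ + π₁ Dᶜ = π₂ Dᶜ := by
    have h := congrArg (fun μ : Measure X => μ Set.univ) hb
    simp only [Measure.add_apply, Measure.restrict_apply_univ] at h
    exact h
  have hπ₁split : π₁ D + π₁ Dᶜ = 1 := by
    rw [measure_add_measure_compl hD, measure_univ]
  have hπ₂split : π₂ D + π₂ Dᶜ = 1 := by
    rw [measure_add_measure_compl hD, measure_univ]
  have tr : ∀ {u v w : ℝ≥0∞}, u + v = w → u ≠ ⊤ → v ≠ ⊤ →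
      u.toReal + v.toReal = w.toReal := by
    intro u v w h hu hv
    rw [← ENNReal.toReal_add hu hv, h]
  haveI : IsFiniteMeasure a := isFiniteMeasure_of_le π₁
    (Measure.sub_le.trans Measure.restrict_le_self)
  haveI : IsFiniteMeasure b := isFiniteMeasure_of_le π₂
    (Measure.sub_le.trans Measure.restrict_le_self)
  have r_haU := tr haU (measure_ne_top _ _) (measure_ne_top _ _)
  have r_hbU := tr hbU (measure_ne_top _ _) (measure_ne_top _ _)
  have r_π₁ := tr hπ₁split (measure_ne_top _ _) (measure_ne_top _ _)
  have r_π₂ := tr hπ₂split (measure_ne_top _ _) (measure_ne_top _ _)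
  have hmeq : (a Set.univ).toReal = (b Set.univ).toReal := by
    have h1r : (1 : ℝ≥0∞).toReal = 1 := by simp
    rw [h1r] at r_π₁ r_π₂
    linarith
  -- in either case both masses vanish
  have hboth : a Set.univ = 0 ∧ b Set.univ = 0 := by
    have fin_a : a Set.univ ≠ ⊤ := measure_ne_top _ _
    have fin_b : b Set.univ ≠ ⊤ := measure_ne_top _ _
    rcases hcases with h | h
    · have ha0 : a Set.univ = 0 := himpa h
      have hb0 : b Set.univ = 0 := by
        have : (b Set.univ).toReal = 0 := by
          rw [← hmeq, ha0]; simp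
        rcases (ENNReal.toReal_eq_zero_iff _).1 this with h' | h'
        · exact h'
        · exact absurd h' fin_b
      exact ⟨ha0, hb0⟩
    · have hb0 : b Set.univ = 0 := himpb h
      have ha0 : a Set.univ = 0 := by
        have : (a Set.univ).toReal = 0 := by
          rw [hmeq, hb0]; simp
        rcases (ENNReal.toReal_eq_zero_iff _).1 this with h' | h'
        · exact h'
        · exact absurd h' fin_a
      exact ⟨ha0, hb0⟩
  have ha0 : a = 0 := Measure.measure_univ_eq_zero.1 hboth.1
  have hb0 : b = 0 := Measure.measure_univ_eq_zero.1 hboth.2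
  have hres1 : π₁.restrict D = π₂.restrict D := by
    rw [← ha, ha0, zero_add]
  have hres2 : π₂.restrict Dᶜ = π₁.restrict Dᶜ := by
    rw [← hb, hb0, zero_add]
  calc π₁ = π₁.restrict D + π₁.restrict Dᶜ := (Measure.restrict_add_restrict_compl hD).symm
    _ = π₂.restrict D + π₂.restrict Dᶜ := by rw [hres1, hres2]
    _ = π₂ := Measure.restrict_add_restrict_compl hD
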